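/- Let F be a field with |F| ≥ d for a positive integer d, and let C ⊆ F^d be the set of d Vandermonde vectors (1, α_i, ..., α_i^{d−1})ᵀ for distinct α₁,...,α_d ∈ F. For a positive integer ℓ, define p : F^{d×(dℓ)} → F mapping M = (M₁,...,M_ℓ), with each M_i ∈ F^{d×d}, to the product ∏_{i∈[ℓ]} det(M_i'), where M_i' is M_i with its first row replaced by ones. Then p is a polynomial of degree (d−1)ℓ, and for every C-colored matrix M, p(M) ≠ 0 if and only if for each i ∈ [ℓ], the columns of M_i are exactly all d vectors of C. Consequently, the pair (C, p) captures the (d, ℓ, d)-uniformly rainbow property. -/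
import Mathlib


/-- With `C` the set of `d` Vandermonde vectors in `F^d`, the product over `l` blocks of
the first-row-replaced determinant is a polynomial of total degree `(d−1)·l` which is
nonzero on a `C`-colored matrix iff every block's columns are exactly all of `C`;
equivalently it captures the `(d, l, d)`-uniformly rainbow property. -/
theorem stmt9 {F : Type*} [Field F] [DecidableEq F] (d l : ℕ) (hd : 0 < d) (hl : 0 < l)
    (α : Fin d → F) (hα : Function.Injective α) :
    let P : MvPolynomial (Fin l × Fin d × Fin d) F :=
      ∏ i : Fin l, Matrix.det (Matrix.updateRow
        (Matrix.of fun a b => MvPolynomial.X (i, a, b)) ⟨0, hd⟩ 1)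
    P.totalDegree = (d - 1) * l ∧
    ∀ M : Fin l → Matrix (Fin d) (Fin d) F,
      (∀ i j, ∃ s : Fin d, ∀ k, M i k j = α s ^ (k : ℕ)) →
      ((MvPolynomial.eval (fun t => M t.1 t.2.1 t.2.2) P ≠ 0 ↔
          ∀ (i : Fin l) (s : Fin d), ∃ j : Fin d, ∀ k, M i k j = α s ^ (k : ℕ)) ∧
        (MvPolynomial.eval (fun t => M t.1 t.2.1 t.2.2) P ≠ 0 ↔
          (∀ i, Function.Injective fun j => fun k => M i k j) ∧
          ∀ i i', (Finset.univ.image fun j => fun k : Fin d => M i k j) =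
            Finset.univ.image fun j => fun k => M i' k j)) := by
  intro P
  set z : Fin d := ⟨0, hd⟩ with hz
  have hzv : (z : ℕ) = 0 := rfl
  -- each factor has total degree ≤ d - 1
  have hfac : ∀ i : Fin l,
      (Matrix.det (Matrix.updateRow
        (Matrix.of fun a b => MvPolynomial.X (i, a, b) :
          Matrix (Fin d) (Fin d) (MvPolynomial (Fin l × Fin d × Fin d) F)) z 1)).totalDegree
        ≤ d - 1 := by
    intro i
    rw [Matrix.det_apply]
    refine MvPolynomial.totalDegree_finsetSum_le ?_
    intro σ _
    refine le_trans (MvPolynomial.totalDegree_smul_le _ _) ?_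
    set a0 : Fin d := σ.symm z with ha0
    have hsa0 : σ a0 = z := σ.apply_symm_apply z
    rw [← Finset.prod_erase_mul Finset.univ _ (Finset.mem_univ a0)]
    have h1 : (Matrix.updateRow
        (Matrix.of fun a b => MvPolynomial.X (i, a, b) :
          Matrix (Fin d) (Fin d) (MvPolynomial (Fin l × Fin d × Fin d) F)) z 1) (σ a0) a0
        = 1 := by rw [hsa0, Matrix.updateRow_self]; rfl
    rw [h1, mul_one]
    refine le_trans (MvPolynomial.totalDegree_finset_prod _ _) ?_
    have : ∀ a ∈ Finset.univ.erase a0,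
        ((Matrix.updateRow
        (Matrix.of fun a b => MvPolynomial.X (i, a, b) :
          Matrix (Fin d) (Fin d) (MvPolynomial (Fin l × Fin d × Fin d) F)) z 1) (σ a) a).totalDegree ≤ 1 := by
      intro a ha
      have hne : σ a ≠ z := by
        intro h
        exact (Finset.mem_erase.mp ha).1 (by rw [ha0, ← h, Equiv.symm_apply_apply])
      rw [Matrix.updateRow_ne hne]
      simp [MvPolynomial.totalDegree_X]
    refine le_trans (Finset.sum_le_sum this) ?_
    simp [Finset.card_erase_of_mem]
  constructor
  · -- total degree
    have hub : P.totalDegree ≤ (d - 1) * l := by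
      refine le_trans (MvPolynomial.totalDegree_finset_prod _ _) ?_
      calc ∑ i : Fin l, (Matrix.det (Matrix.updateRow
            (Matrix.of fun a b => MvPolynomial.X (i, a, b)) z 1)).totalDegree
          ≤ ∑ _i : Fin l, (d - 1) := Finset.sum_le_sum fun i _ => hfac i
        _ = (d - 1) * l := by simp [mul_comm]
    -- lower bound via specialization to polynomials
    set f : Fin l × Fin d × Fin d → Polynomial F :=
      fun t => Polynomial.C (α t.2.2 ^ (t.2.1 : ℕ)) * Polynomial.X with hf
    have hV : (Matrix.of fun a b : Fin d => α b ^ (a : ℕ)).det ≠ 0 := by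
      have h0 : (Matrix.of fun a b : Fin d => α b ^ (a : ℕ)) =
          (Matrix.vandermonde α).transpose := by
        ext a b
        simp [Matrix.vandermonde]
      rw [h0, Matrix.det_transpose]
      exact Matrix.det_vandermonde_ne_zero_iff.mpr hα
    have haeval : MvPolynomial.aeval f P =
        Polynomial.C ((Matrix.of fun a b : Fin d => α b ^ (a : ℕ)).det ^ l) *
          Polynomial.X ^ ((d - 1) * l) := by
      rw [map_prod]
      have hfaceval : ∀ i : Fin l,
          MvPolynomial.aeval f (Matrix.det (Matrix.updateRow
            (Matrix.of fun a b => MvPolynomial.X (i, a, b) :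
              Matrix (Fin d) (Fin d) (MvPolynomial (Fin l × Fin d × Fin d) F)) z 1)) =
          Polynomial.C (Matrix.of fun a b : Fin d => α b ^ (a : ℕ)).det *
            Polynomial.X ^ (d - 1) := by
        intro i
        rw [AlgHom.map_det, AlgHom.mapMatrix_apply]
        have hmat : (Matrix.updateRow
            (Matrix.of fun a b => MvPolynomial.X (i, a, b) :
              Matrix (Fin d) (Fin d) (MvPolynomial (Fin l × Fin d × Fin d) F)) z 1).map
            (MvPolynomial.aeval f) =
            Matrix.diagonal (fun a : Fin d => Polynomial.X ^ (if a = z then 0 else 1)) *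
              (Matrix.of fun a b : Fin d => Polynomial.C (α b ^ (a : ℕ))) := by
          ext a b
          by_cases h : a = z
          · subst h
            simp [Matrix.map_apply, Matrix.updateRow_self, Matrix.diagonal_mul, hzv]
          · simp [Matrix.map_apply, Matrix.updateRow_ne h, Matrix.diagonal_mul, h, hf,
              mul_comm]
        rw [hmat, Matrix.det_mul, Matrix.det_diagonal]
        have h2 : (Matrix.of fun a b : Fin d => Polynomial.C (α b ^ (a : ℕ))).det =
            Polynomial.C (Matrix.of fun a b : Fin d => α b ^ (a : ℕ)).det := by
          rw [RingHom.map_det]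
          rfl
        have h3 : ∏ a : Fin d, Polynomial.X ^ (if a = z then 0 else 1) =
            (Polynomial.X : Polynomial F) ^ (d - 1) := by
          rw [Finset.prod_pow_eq_pow_sum]
          congr 1
          rw [← Finset.sum_erase_add Finset.univ _ (Finset.mem_univ z), if_pos rfl,
            add_zero,
            Finset.sum_congr rfl (fun a ha => if_neg (Finset.mem_erase.mp ha).1),
            Finset.sum_const, smul_eq_mul, mul_one,
            Finset.card_erase_of_mem (Finset.mem_univ z), Finset.card_univ,
            Fintype.card_fin]
        rw [h2, h3, mul_comm]
      rw [Finset.prod_congr rfl fun i _ => hfaceval i]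
      rw [Finset.prod_const, mul_pow, ← Polynomial.C_pow, ← pow_mul]
      simp [Finset.card_univ, mul_comm]
    have hfdeg : ∀ t, (f t).natDegree ≤ 1 := by
      intro t
      rw [hf]
      exact (Polynomial.natDegree_C_mul_le _ _).trans (le_of_eq Polynomial.natDegree_X)
    have h1 := MvPolynomial.aeval_natDegree_le (n := 1) P le_rfl f hfdeg
    rw [haeval, Polynomial.natDegree_C_mul_X_pow _ _ (pow_ne_zero _ hV), mul_one] at h1
    exact le_antisymm hub h1
  · intro M hM
    choose s hs using hM
    set v : Fin d → Fin d → F := fun s0 => fun k => α s0 ^ (k : ℕ) with hv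
    have hMv : ∀ i j, (fun k => M i k j) = v (s i j) := fun i j => funext fun k => hs i j k
    have hvinj : Function.Injective v := by
      intro s1 s2 h
      rcases Nat.lt_or_ge 1 d with h2 | h2
      · have := congrFun h ⟨1, h2⟩
        simp [hv] at this
        exact hα this
      · have hd1 : d = 1 := le_antisymm h2 hd
        subst hd1
        exact Subsingleton.elim s1 s2
    have heval : MvPolynomial.eval (fun t => M t.1 t.2.1 t.2.2) P = ∏ i, (M i).det := by
      rw [map_prod]
      refine Finset.prod_congr rfl fun i _ => ?_
      rw [RingHom.map_det, RingHom.mapMatrix_apply]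
      congr 1
      rw [Matrix.map_updateRow]
      have hrow : M i z = (1 : Fin d → F) := by
        funext b
        rw [hs i b z, hzv, pow_zero]; rfl
      have : (Matrix.of fun a b => MvPolynomial.X (i, a, b) :
          Matrix (Fin d) (Fin d) (MvPolynomial (Fin l × Fin d × Fin d) F)).map
          (MvPolynomial.eval fun t => M t.1 t.2.1 t.2.2) = M i := by
        ext a b; simp [Matrix.map_apply]
      rw [this]
      have h1 : (MvPolynomial.eval (fun t : Fin l × Fin d × Fin d => M t.1 t.2.1 t.2.2)) ∘
          (1 : Fin d → MvPolynomial (Fin l × Fin d × Fin d) F) = M i z := by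
        funext b; simp [hrow]
      rw [h1, Matrix.updateRow_eq_self]
    have hdet : ∀ i, (M i).det ≠ 0 ↔ Function.Injective (s i) := by
      intro i
      have hMi : M i = (Matrix.vandermonde (α ∘ s i)).transpose := by
        ext k j; simp [Matrix.vandermonde, hs]
      rw [hMi, Matrix.det_transpose, Matrix.det_vandermonde_ne_zero_iff]
      exact ⟨fun h => h.of_comp, fun h => hα.comp h⟩
    have hne : MvPolynomial.eval (fun t => M t.1 t.2.1 t.2.2) P ≠ 0 ↔
        ∀ i, Function.Injective (s i) := by
      rw [heval, Finset.prod_ne_zero_iff]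
      exact ⟨fun h i => (hdet i).mp (h i (Finset.mem_univ i)),
        fun h i _ => (hdet i).mpr (h i)⟩
    constructor
    · rw [hne]
      constructor
      · intro h i s0
        obtain ⟨j, hj⟩ := (Finite.injective_iff_surjective.mp (h i)) s0
        exact ⟨j, fun k => by rw [hs i j k, hj]⟩
      · intro h i
        rw [Finite.injective_iff_surjective]
        intro s0
        obtain ⟨j, hj⟩ := h i s0
        exact ⟨j, hvinj ((hMv i j).symm.trans (funext hj))⟩
    · rw [hne]
      have hinj : ∀ i, (Function.Injective fun j => fun k => M i k j) ↔
          Function.Injective (s i) := by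
        intro i
        have : (fun j => fun k => M i k j) = v ∘ s i := funext fun j => hMv i j
        rw [this]
        exact ⟨fun h => h.of_comp, fun h => hvinj.comp h⟩
      constructor
      · intro h
        refine ⟨fun i => (hinj i).mpr (h i), fun i i' => ?_⟩
        have himg : ∀ i'', Function.Injective (s i'') →
            (Finset.univ.image fun j => fun k : Fin d => M i'' k j) =
              Finset.univ.image v := by
          intro i'' hi
          have : (fun j => fun k : Fin d => M i'' k j) = v ∘ s i'' :=
            funext fun j => hMv i'' j
          rw [this, ← Finset.image_image,
            Finset.image_univ_of_surjective (Finite.injective_iff_surjective.mp hi)]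
        rw [himg i (h i), himg i' (h i')]
      · intro h i
        exact (hinj i).mp (h.1 i)
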